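/- Let K be a field of prime characteristic p, T = K[x_1,…,x_n], and R = K[[x_1,…,x_n]]. Let A be an ideal of T and u ∈ T. Then (AR)^{⋆^e u} = (A^{⋆^e u})R for every e ≥ 1. -/

import Mathlib

/-- The `q`-th Frobenius power of an ideal: the ideal generated by `q`-th powers of elements. -/
def Ideal.frobPow {R : Type*} [CommSemiring R] (q : ℕ) (I : Ideal R) : Ideal R :=
  Ideal.span ((fun a => a ^ q) '' (I : Set R))

/-- `Ã^{(e)}`: the intersection of all ideals `L` with `A ⊆ L^{[q]}` (`q = p^e`). -/
def Ideal.tilde {T : Type*} [CommSemiring T] (q : ℕ) (A : Ideal T) : Ideal T :=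
  sInf { L : Ideal T | A ≤ Ideal.frobPow q L }

/-- The ascending chain `A_0 = A`, `A_{i+1} = (u A_i)~^{(e)} + A_i` defining the
`⋆`-closure. -/
def Ideal.starChain {T : Type*} [CommRing T] (u : T) (q : ℕ) (A : Ideal T) : ℕ → Ideal T
  | 0 => A
  | i + 1 =>
      Ideal.tilde q (Ideal.span {u} * Ideal.starChain u q A i) + Ideal.starChain u q A i

/-- The `⋆`-closure `A^{⋆^e u}`: the stable value of the chain `A_i`. -/
def Ideal.starClosure {T : Type*} [CommRing T] (u : T) (q : ℕ) (A : Ideal T) : Ideal T :=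
  ⨆ i, Ideal.starChain u q A i


open MvPolynomial

set_option linter.unusedSectionVars false

noncomputable section

namespace S15


variable {K : Type u} [Field K] {p : ℕ} [hp : Fact p.Prime] [CharP K p] {e n : ℕ}



lemma q_pos : 0 < p ^ e := pow_pos hp.out.pos e

lemma q_ne : (p : ℕ) ^ e ≠ 0 := q_pos.ne'

variable (K p e) in
/-- The subfield of `p^e`-th powers. -/
def Kq : Subfield K := (iterateFrobenius K p e).fieldRange

lemma powq_inj {x y : K} (h : x ^ p ^ e = y ^ p ^ e) : x = y :=
  (iterateFrobenius K p e).injective (by rwa [iterateFrobenius_def, iterateFrobenius_def])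

/-- The `p^e`-th root of an element of `Kq`. -/
def kroot (s : Kq K p e) : K := (RingHom.mem_fieldRange.mp s.2).choose

lemma kroot_pow (s : Kq K p e) : kroot s ^ p ^ e = (s : K) := by
  have h := (RingHom.mem_fieldRange.mp s.2).choose_spec
  rwa [iterateFrobenius_def] at h

lemma kroot_eq {s : Kq K p e} {x : K} (h : (s : K) = x ^ p ^ e) : kroot s = x :=
  powq_inj (by rw [kroot_pow, h])

lemma kroot_zero : kroot (0 : Kq K p e) = 0 :=
  kroot_eq (by rw [zero_pow q_ne]; rfl)

lemma kroot_add (s t : Kq K p e) : kroot (s + t) = kroot s + kroot t :=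
  kroot_eq (by push_cast; rw [add_pow_char_pow, kroot_pow, kroot_pow])

lemma pow_mem_Kq (t : K) : t ^ p ^ e ∈ Kq K p e := ⟨t, iterateFrobenius_def ..⟩

variable (K p e) in
/-- A basis of `K` over the subfield of `p^e`-th powers. -/
def bas : Module.Basis (Module.Basis.ofVectorSpaceIndex (Kq K p e) K) (Kq K p e) K :=
  Module.Basis.ofVectorSpace _ _

lemma kq_smul (s : Kq K p e) (x : K) : s • x = (s : K) * x := rfl





variable (p e) in
/-- View a bounded exponent vector as a `Finsupp`. -/
def expOf (β : Fin n → Fin (p ^ e)) : Fin n →₀ ℕ :=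
  Finsupp.equivFunOnFinite.symm fun i => (β i : ℕ)

@[simp] lemma expOf_apply (β : Fin n → Fin (p ^ e)) (i : Fin n) :
    expOf p e β i = (β i : ℕ) := rfl

variable (p e) in
def divq (m : Fin n →₀ ℕ) : Fin n →₀ ℕ := m.mapRange (· / p ^ e) (Nat.zero_div _)

@[simp] lemma divq_apply (m : Fin n →₀ ℕ) (i : Fin n) : divq p e m i = m i / p ^ e := rfl

variable (p e) in
def modq [Fact p.Prime] (m : Fin n →₀ ℕ) : Fin n → Fin (p ^ e) :=
  fun i => ⟨m i % p ^ e, Nat.mod_lt _ q_pos⟩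

@[simp] lemma modq_apply (m : Fin n →₀ ℕ) (i : Fin n) : (modq p e m i : ℕ) = m i % p ^ e := rfl

@[simp] lemma smul_apply' (k : ℕ) (m : Fin n →₀ ℕ) (i : Fin n) : (k • m) i = k * m i := by
  rw [Finsupp.smul_apply, smul_eq_mul]

lemma modq_smul_add (w : Fin n →₀ ℕ) (β : Fin n → Fin (p ^ e)) :
    modq p e (p ^ e • w + expOf p e β) = β := by
  funext i
  apply Fin.ext
  simp [Nat.mul_add_mod, Nat.mod_eq_of_lt (β i).2]

lemma divq_smul_add (w : Fin n →₀ ℕ) (β : Fin n → Fin (p ^ e)) :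
    divq p e (p ^ e • w + expOf p e β) = w := by
  ext i
  simp [Nat.mul_add_div q_pos, Nat.div_eq_of_lt (β i).2]

lemma divq_smul (w : Fin n →₀ ℕ) : divq p e (p ^ e • w) = w := by
  ext i
  simp [Nat.mul_div_cancel_left _ q_pos]

lemma smul_divq_add_modq (m : Fin n →₀ ℕ) :
    p ^ e • divq p e m + expOf p e (modq p e m) = m := by
  ext i
  simp [Nat.div_add_mod]

lemma smul_cancel {m w : Fin n →₀ ℕ} (h : p ^ e • m = p ^ e • w) : m = w := by
  ext i
  have h2 := congrArg (fun z : Fin n →₀ ℕ => z i) h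
  simp only [smul_apply'] at h2
  exact Nat.eq_of_mul_eq_mul_left q_pos h2

lemma le_of_smul_le {w α : Fin n →₀ ℕ} {β : Fin n → Fin (p ^ e)}
    (h : p ^ e • w ≤ p ^ e • α + expOf p e β) : w ≤ α := by
  intro i
  have hi : p ^ e * w i ≤ p ^ e * α i + (β i : ℕ) := by
    have := h i
    simpa using this
  by_contra hc
  push_neg at hc
  have h1 : p ^ e * (α i + 1) ≤ p ^ e * w i := Nat.mul_le_mul_left _ hc
  have h2 : p ^ e * α i + (β i : ℕ) < p ^ e * (α i + 1) := by
    rw [Nat.mul_add, Nat.mul_one]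
    exact Nat.add_lt_add_left (β i).2 _
  omega

lemma sub_smul_eq {w α : Fin n →₀ ℕ} (β : Fin n → Fin (p ^ e)) (h : w ≤ α) :
    (p ^ e • α + expOf p e β) - p ^ e • w = p ^ e • (α - w) + expOf p e β := by
  ext i
  have hi : w i ≤ α i := h i
  obtain ⟨c, hc⟩ : ∃ c, α i = w i + c := ⟨α i - w i, by omega⟩
  simp only [Finsupp.tsub_apply, Finsupp.add_apply, smul_apply', expOf_apply, hc,
    Nat.mul_add, Nat.add_sub_cancel_left]
  omega




-- char p instances
instance : CharP (MvPolynomial (Fin n) K) p :=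
  charP_of_injective_ringHom (C_injective (Fin n) K) p

instance : CharP (MvPowerSeries (Fin n) K) p :=
  charP_of_injective_ringHom (f := (MvPolynomial.coeToMvPowerSeries.ringHom).comp
    (C : K →+* MvPolynomial (Fin n) K))
    ((MvPolynomial.coe_injective (Fin n) K).comp (C_injective (Fin n) K)) p

/-- Frobenius on a multivariate polynomial, coefficientwise description. -/
lemma poly_pow_q (h : MvPolynomial (Fin n) K) :
    h ^ p ^ e = ∑ m ∈ h.support, monomial (p ^ e • m) (h.coeff m ^ p ^ e) := by
  conv_lhs => rw [h.as_sum]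
  rw [sum_pow_char_pow]
  simp only [monomial_pow]

lemma coeffT_pow_smul (h : MvPolynomial (Fin n) K) (w : Fin n →₀ ℕ) :
    coeff (p ^ e • w) (h ^ p ^ e) = coeff w h ^ p ^ e := by
  classical
  rw [poly_pow_q, MvPolynomial.coeff_sum]
  rw [Finset.sum_eq_single w
    (fun m _ hne => by
      rw [coeff_monomial, if_neg (fun hh => hne ((smul_cancel hh)))])
    (fun hw => by
      rw [coeff_monomial, if_pos rfl, notMem_support_iff.mp hw, zero_pow q_ne])]
  rw [coeff_monomial, if_pos rfl]

lemma coeffT_pow_ne (h : MvPolynomial (Fin n) K) {v : Fin n →₀ ℕ}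
    (hv : ∀ w, v ≠ p ^ e • w) : coeff v (h ^ p ^ e) = 0 := by
  classical
  rw [poly_pow_q, MvPolynomial.coeff_sum]
  apply Finset.sum_eq_zero
  intro m _
  rw [coeff_monomial, if_neg (fun hh => hv m hh.symm)]

open MvPowerSeries in
lemma coeff_pow_agree {a b : MvPowerSeries (Fin n) K} {v : Fin n →₀ ℕ}
    (h : ∀ u ≤ v, coeff u a = coeff u b) (k : ℕ) :
    ∀ w ≤ v, coeff w (a ^ k) = coeff w (b ^ k) := by
  induction k with
  | zero => simp
  | succ k ih =>
    intro w hw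
    rw [pow_succ, pow_succ, MvPowerSeries.coeff_mul, MvPowerSeries.coeff_mul]
    apply Finset.sum_congr rfl
    intro x hx
    rw [Finset.HasAntidiagonal.mem_antidiagonal] at hx
    have h1 : x.1 ≤ w := hx ▸ le_add_self.trans_eq (add_comm x.2 x.1)
    have h2 : x.2 ≤ w := hx ▸ le_add_self
    rw [ih x.1 (h1.trans hw), h x.2 (h2.trans hw)]

open MvPowerSeries in
/-- truncation of a power series below `v` as a polynomial. -/
lemma exists_poly_agree (a : MvPowerSeries (Fin n) K) (v : Fin n →₀ ℕ) :
    ∃ P : MvPolynomial (Fin n) K, (∀ u ≤ v, coeff u (P : MvPowerSeries (Fin n) K) = coeff u a) ∧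
      (∀ u ≤ v, MvPolynomial.coeff u P = coeff u a) := by
  classical
  refine ⟨∑ m ∈ Finset.Iic v, monomial m (coeff m a), ?_, ?_⟩ <;>
  · intro u hu
    simp only [MvPolynomial.coeff_coe, MvPolynomial.coeff_sum, MvPolynomial.coeff_monomial]
    rw [Finset.sum_ite_eq' (Finset.Iic v) u (fun m => MvPowerSeries.coeff m a)]
    rw [if_pos (Finset.mem_Iic.mpr hu)]

open MvPowerSeries in
lemma coeff_pow_q_smul (a : MvPowerSeries (Fin n) K) (w : Fin n →₀ ℕ) :
    coeff (p ^ e • w) (a ^ p ^ e) = coeff w a ^ p ^ e := by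
  obtain ⟨P, hP, hP'⟩ := exists_poly_agree a (p ^ e • w)
  have hw : w ≤ p ^ e • w := by
    intro i
    simpa using Nat.le_mul_of_pos_left _ (q_pos (p := p) (e := e))
  rw [← coeff_pow_agree hP _ _ le_rfl, ← MvPolynomial.coe_pow, MvPolynomial.coeff_coe,
    coeffT_pow_smul, hP' w hw]

open MvPowerSeries in
lemma coeff_pow_q_ne (a : MvPowerSeries (Fin n) K) {v : Fin n →₀ ℕ}
    (hv : ∀ w, v ≠ p ^ e • w) : coeff v (a ^ p ^ e) = 0 := by
  obtain ⟨P, hP, hP'⟩ := exists_poly_agree a v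
  rw [← coeff_pow_agree hP _ _ le_rfl, ← MvPolynomial.coe_pow, MvPolynomial.coeff_coe,
    coeffT_pow_ne _ hv]



variable (p e) in
/-- The `(j, β)` root component of a power series. -/
def compR (j : Module.Basis.ofVectorSpaceIndex (Kq K p e) K) (β : Fin n → Fin (p ^ e))
    (g : MvPowerSeries (Fin n) K) : MvPowerSeries (Fin n) K :=
  fun α => kroot ((bas K p e).repr (MvPowerSeries.coeff (p ^ e • α + expOf p e β) g) j)

lemma compR_coeff (j : Module.Basis.ofVectorSpaceIndex (Kq K p e) K) (β : Fin n → Fin (p ^ e))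
    (g : MvPowerSeries (Fin n) K) (α : Fin n →₀ ℕ) :
    MvPowerSeries.coeff α (compR p e j β g) =
      kroot ((bas K p e).repr (MvPowerSeries.coeff (p ^ e • α + expOf p e β) g) j) := rfl

variable (p e) in
/-- The `(j, β)` root component of a polynomial. -/
def compT (j : Module.Basis.ofVectorSpaceIndex (Kq K p e) K) (β : Fin n → Fin (p ^ e))
    (g : MvPolynomial (Fin n) K) : MvPolynomial (Fin n) K :=
  ∑ m ∈ g.support.filter (fun m => modq p e m = β),
    monomial (divq p e m) (kroot ((bas K p e).repr (g.coeff m) j))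

lemma compT_coeff (j : Module.Basis.ofVectorSpaceIndex (Kq K p e) K) (β : Fin n → Fin (p ^ e))
    (g : MvPolynomial (Fin n) K) (w : Fin n →₀ ℕ) :
    coeff w (compT p e j β g) =
      kroot ((bas K p e).repr (coeff (p ^ e • w + expOf p e β) g) j) := by
  classical
  have hmod : modq p e (p ^ e • w + expOf p e β) = β := modq_smul_add w β
  have hdiv : divq p e (p ^ e • w + expOf p e β) = w := divq_smul_add w β
  rw [compT, MvPolynomial.coeff_sum]
  by_cases hMs : (p ^ e • w + expOf p e β) ∈ g.support
  · rw [Finset.sum_eq_single (p ^ e • w + expOf p e β)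
      (fun m hm hne => by
        rw [MvPolynomial.coeff_monomial, if_neg]
        intro hdm
        apply hne
        rw [Finset.mem_filter] at hm
        have h3 := smul_divq_add_modq (p := p) (e := e) m
        rw [hdm, hm.2] at h3
        exact h3.symm)
      (fun hMf => absurd (Finset.mem_filter.mpr ⟨hMs, hmod⟩) hMf)]
    rw [MvPolynomial.coeff_monomial, hdiv, if_pos rfl]
  · rw [Finset.sum_eq_zero (fun m hm => by
      rw [MvPolynomial.coeff_monomial, if_neg]
      intro hdm
      rw [Finset.mem_filter] at hm
      have h3 := smul_divq_add_modq (p := p) (e := e) m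
      rw [hdm, hm.2] at h3
      exact hMs (h3 ▸ hm.1))]
    rw [notMem_support_iff.mp hMs, map_zero, Finsupp.coe_zero, Pi.zero_apply, kroot_zero]

lemma compR_add (j : Module.Basis.ofVectorSpaceIndex (Kq K p e) K) (β : Fin n → Fin (p ^ e))
    (a b : MvPowerSeries (Fin n) K) :
    compR p e j β (a + b) = compR p e j β a + compR p e j β b := by
  apply MvPowerSeries.ext
  intro α
  rw [map_add, compR_coeff, compR_coeff, compR_coeff, map_add, map_add, Finsupp.add_apply,
    kroot_add]

lemma compR_zero (j : Module.Basis.ofVectorSpaceIndex (Kq K p e) K) (β : Fin n → Fin (p ^ e)) :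
    compR p e j β (0 : MvPowerSeries (Fin n) K) = 0 := by
  apply MvPowerSeries.ext
  intro α
  rw [compR_coeff, map_zero, map_zero, map_zero, Finsupp.coe_zero, Pi.zero_apply, kroot_zero]

variable (p e) in
/-- `compR` as an additive monoid hom. -/
def compRHom (j : Module.Basis.ofVectorSpaceIndex (Kq K p e) K) (β : Fin n → Fin (p ^ e)) :
    MvPowerSeries (Fin n) K →+ MvPowerSeries (Fin n) K where
  toFun := compR p e j β
  map_zero' := compR_zero j β
  map_add' := compR_add j β

lemma compT_coe (j : Module.Basis.ofVectorSpaceIndex (Kq K p e) K) (β : Fin n → Fin (p ^ e))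
    (g : MvPolynomial (Fin n) K) :
    ((compT p e j β g : MvPolynomial (Fin n) K) : MvPowerSeries (Fin n) K) =
      compR p e j β (g : MvPowerSeries (Fin n) K) := by
  apply MvPowerSeries.ext
  intro α
  rw [MvPolynomial.coeff_coe, compT_coeff, compR_coeff, MvPolynomial.coeff_coe]

lemma repr_mul_powq (c t : K) (j : Module.Basis.ofVectorSpaceIndex (Kq K p e) K) :
    ((bas K p e).repr (c * t ^ p ^ e) j : K) = ((bas K p e).repr c j : K) * t ^ p ^ e := by
  have h : c * t ^ p ^ e = (⟨t ^ p ^ e, pow_mem_Kq t⟩ : Kq K p e) • c := by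
    rw [kq_smul]; ring
  rw [h, map_smul, Finsupp.smul_apply, smul_eq_mul, MulMemClass.coe_mul]
  exact mul_comm _ _

lemma repr_sum_apply {ι : Type v} (S : Finset ι) (c : ι → K) (t : ι → K)
    (j : Module.Basis.ofVectorSpaceIndex (Kq K p e) K) :
    ((bas K p e).repr (∑ x ∈ S, c x * t x ^ p ^ e) j : K)
      = ∑ x ∈ S, ((bas K p e).repr (c x) j : K) * t x ^ p ^ e := by
  classical
  induction S using Finset.induction_on with
  | empty => simp
  | insert _ _ hx ih =>
    rw [Finset.sum_insert hx, Finset.sum_insert hx, map_add, Finsupp.add_apply,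
      AddMemClass.coe_add, ih, repr_mul_powq]

open MvPowerSeries in
lemma coeff_mul_powq (a b : MvPowerSeries (Fin n) K) (α : Fin n →₀ ℕ) (β : Fin n → Fin (p ^ e)) :
    MvPowerSeries.coeff (p ^ e • α + expOf p e β) (a * b ^ p ^ e) =
      ∑ x ∈ Finset.HasAntidiagonal.antidiagonal α,
        MvPowerSeries.coeff (p ^ e • x.1 + expOf p e β) a *
          (MvPowerSeries.coeff x.2 b) ^ p ^ e := by
  classical
  rw [MvPowerSeries.coeff_mul]
  rw [← Finset.sum_filter_add_sum_filter_not
    (Finset.HasAntidiagonal.antidiagonal (p ^ e • α + expOf p e β)) (fun x => ∃ w, x.2 = p ^ e • w)]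
  have h2 : ∑ x ∈ (Finset.HasAntidiagonal.antidiagonal (p ^ e • α + expOf p e β)).filter
      (fun x => ¬ ∃ w, x.2 = p ^ e • w),
      MvPowerSeries.coeff x.1 a * MvPowerSeries.coeff x.2 (b ^ p ^ e) = 0 := by
    apply Finset.sum_eq_zero
    intro x hx
    rw [Finset.mem_filter] at hx
    rw [coeff_pow_q_ne b (fun w hw => hx.2 ⟨w, hw⟩), mul_zero]
  rw [h2, add_zero]
  apply Finset.sum_nbij' (i := fun x => (α - divq p e x.2, divq p e x.2))
    (j := fun y => (p ^ e • y.1 + expOf p e β, p ^ e • y.2))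
  · intro x hx
    rw [Finset.mem_filter, Finset.HasAntidiagonal.mem_antidiagonal] at hx
    obtain ⟨hsum, w, hw⟩ := hx
    have hle : w ≤ α := le_of_smul_le (by rw [← hw, ← hsum]; exact le_add_self)
    rw [Finset.HasAntidiagonal.mem_antidiagonal, hw, divq_smul]
    exact tsub_add_cancel_of_le hle
  · intro y hy
    rw [Finset.HasAntidiagonal.mem_antidiagonal] at hy
    rw [Finset.mem_filter, Finset.HasAntidiagonal.mem_antidiagonal]
    constructor
    · rw [add_right_comm, ← smul_add, hy]
    · exact ⟨y.2, rfl⟩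
  · intro x hx
    rw [Finset.mem_filter, Finset.HasAntidiagonal.mem_antidiagonal] at hx
    obtain ⟨hsum, w, hw⟩ := hx
    have hle : w ≤ α := le_of_smul_le (by rw [← hw, ← hsum]; exact le_add_self)
    have hx1 : x.1 = p ^ e • (α - w) + expOf p e β := by
      rw [← sub_smul_eq β hle, ← hw]
      exact eq_tsub_of_add_eq hsum
    have h2 : divq p e x.2 = w := by rw [hw, divq_smul]
    refine Prod.ext ?_ ?_
    · show p ^ e • (α - divq p e x.2) + expOf p e β = x.1
      rw [h2, hx1]
    · show p ^ e • divq p e x.2 = x.2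
      rw [h2, hw]
  · intro y hy
    rw [Finset.HasAntidiagonal.mem_antidiagonal] at hy
    have h2 : divq p e (p ^ e • y.2) = y.2 := divq_smul y.2
    refine Prod.ext ?_ ?_
    · show α - divq p e (p ^ e • y.2) = y.1
      rw [h2]
      exact (eq_tsub_of_add_eq hy).symm
    · exact h2
  · intro x hx
    rw [Finset.mem_filter, Finset.HasAntidiagonal.mem_antidiagonal] at hx
    obtain ⟨hsum, w, hw⟩ := hx
    have hle : w ≤ α := le_of_smul_le (by rw [← hw, ← hsum]; exact le_add_self)
    have hx1 : x.1 = p ^ e • (α - w) + expOf p e β := by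
      rw [← sub_smul_eq β hle, ← hw]
      exact eq_tsub_of_add_eq hsum
    rw [hw, divq_smul, coeff_pow_q_smul, hx1]

lemma compR_mul_pow (j : Module.Basis.ofVectorSpaceIndex (Kq K p e) K) (β : Fin n → Fin (p ^ e))
    (a b : MvPowerSeries (Fin n) K) :
    compR p e j β (a * b ^ p ^ e) = compR p e j β a * b := by
  apply MvPowerSeries.ext
  intro α
  apply powq_inj (p := p) (e := e)
  rw [compR_coeff, kroot_pow, coeff_mul_powq, repr_sum_apply, MvPowerSeries.coeff_mul]
  rw [← iterateFrobenius_def (R := K) (p := p) (n := e), map_sum]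
  apply Finset.sum_congr rfl
  intro x _
  rw [iterateFrobenius_def, mul_pow, compR_coeff, kroot_pow]


open Classical in
variable (p e) in
/-- A finite set of basis indices covering all coefficients of `g`. -/
def Jset (g : MvPolynomial (Fin n) K) : Finset (Module.Basis.ofVectorSpaceIndex (Kq K p e) K) :=
  g.support.biUnion fun m => ((bas K p e).repr (coeff m g)).support

lemma basis_expand (x : K) :
    ∑ j ∈ ((bas K p e).repr x).support, (bas K p e j : K) * ((bas K p e).repr x j : K) = x := by
  conv_rhs => rw [← (bas K p e).linearCombination_repr x]
  rw [Finsupp.linearCombination_apply, Finsupp.sum]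
  apply Finset.sum_congr rfl
  intro j _
  rw [kq_smul, mul_comm]

lemma reconstruct (g : MvPolynomial (Fin n) K) :
    ∑ j ∈ Jset p e g, ∑ β : Fin n → Fin (p ^ e),
      monomial (expOf p e β) ((bas K p e j : K)) * (compT p e j β g) ^ p ^ e = g := by
  classical
  apply MvPolynomial.ext
  intro m
  rw [MvPolynomial.coeff_sum]
  have hle : expOf p e (modq p e m) ≤ m := by
    intro i
    simpa using Nat.mod_le (m i) (p ^ e)
  have inner : ∀ j, coeff m (∑ β : Fin n → Fin (p ^ e),
      monomial (expOf p e β) ((bas K p e j : K)) * (compT p e j β g) ^ p ^ e)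
      = (bas K p e j : K) * ((bas K p e).repr (coeff m g) j : K) := by
    intro j
    rw [MvPolynomial.coeff_sum]
    rw [Finset.sum_eq_single (modq p e m)
      (fun β _ hne => by
        rw [coeff_monomial_mul']
        split_ifs with hβ
        · rw [coeffT_pow_ne, mul_zero]
          intro w hw
          have hm2 : m = p ^ e • w + expOf p e β := by
            rw [← tsub_add_cancel_of_le hβ, hw]
          have hm3 : modq p e m = β := by rw [hm2, modq_smul_add]
          exact hne hm3.symm
        · rfl)
      (fun hf => absurd (Finset.mem_univ _) hf)]
    rw [coeff_monomial_mul', if_pos hle]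
    have hsub : m - expOf p e (modq p e m) = p ^ e • divq p e m :=
      (eq_tsub_of_add_eq (smul_divq_add_modq m)).symm
    rw [hsub, coeffT_pow_smul, compT_coeff, smul_divq_add_modq, kroot_pow]
  rw [Finset.sum_congr rfl (fun j _ => inner j)]
  by_cases hm : m ∈ g.support
  · have hsub : ((bas K p e).repr (coeff m g)).support ⊆ Jset p e g := by
      intro j hj
      classical
      exact Finset.mem_biUnion.mpr ⟨m, hm, by convert hj⟩
    rw [← Finset.sum_subset hsub (fun j _ hj => by
      rw [Finsupp.notMem_support_iff.mp hj, ZeroMemClass.coe_zero, mul_zero])]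
    exact basis_expand _
  · rw [notMem_support_iff.mp hm, map_zero]
    apply Finset.sum_eq_zero
    intro j _
    rw [Finsupp.coe_zero, Pi.zero_apply, ZeroMemClass.coe_zero, mul_zero]

lemma coe_inj {a b : MvPolynomial (Fin n) K}
    (h : (a : MvPowerSeries (Fin n) K) = (b : MvPowerSeries (Fin n) K)) : a = b :=
  MvPolynomial.coe_injective _ _ h

lemma compT_add (j : Module.Basis.ofVectorSpaceIndex (Kq K p e) K) (β : Fin n → Fin (p ^ e))
    (a b : MvPolynomial (Fin n) K) :
    compT p e j β (a + b) = compT p e j β a + compT p e j β b := by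
  apply coe_inj
  rw [compT_coe, MvPolynomial.coe_add, MvPolynomial.coe_add, compT_coe, compT_coe, compR_add]

lemma compT_zero (j : Module.Basis.ofVectorSpaceIndex (Kq K p e) K) (β : Fin n → Fin (p ^ e)) :
    compT p e j β (0 : MvPolynomial (Fin n) K) = 0 := by
  apply coe_inj
  rw [compT_coe, MvPolynomial.coe_zero, compR_zero]

variable (p e) in
/-- `compT` as an additive monoid hom. -/
def compTHom (j : Module.Basis.ofVectorSpaceIndex (Kq K p e) K) (β : Fin n → Fin (p ^ e)) :
    MvPolynomial (Fin n) K →+ MvPolynomial (Fin n) K where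
  toFun := compT p e j β
  map_zero' := compT_zero j β
  map_add' := compT_add j β

@[simp] lemma compTHom_apply (j : Module.Basis.ofVectorSpaceIndex (Kq K p e) K)
    (β : Fin n → Fin (p ^ e)) (g : MvPolynomial (Fin n) K) :
    compTHom p e j β g = compT p e j β g := rfl

@[simp] lemma compRHom_apply (j : Module.Basis.ofVectorSpaceIndex (Kq K p e) K)
    (β : Fin n → Fin (p ^ e)) (g : MvPowerSeries (Fin n) K) :
    compRHom p e j β g = compR p e j β g := rfl

lemma compT_mul_pow (j : Module.Basis.ofVectorSpaceIndex (Kq K p e) K) (β : Fin n → Fin (p ^ e))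
    (a b : MvPolynomial (Fin n) K) :
    compT p e j β (a * b ^ p ^ e) = compT p e j β a * b := by
  apply coe_inj
  rw [compT_coe, MvPolynomial.coe_mul, MvPolynomial.coe_mul, MvPolynomial.coe_pow,
    compR_mul_pow, compT_coe]

lemma pow_mem_frobPow {A : Type v} [CommRing A] {L : Ideal A} {h : A} (q : ℕ) (hh : h ∈ L) :
    h ^ q ∈ L.frobPow q := Ideal.subset_span ⟨h, hh, rfl⟩

lemma mem_frobPow_iff_T (L : Ideal (MvPolynomial (Fin n) K)) (g : MvPolynomial (Fin n) K) :
    g ∈ L.frobPow (p ^ e) ↔ ∀ j β, compT p e j β g ∈ L := by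
  constructor
  · intro hg j β
    rw [Ideal.frobPow] at hg
    obtain ⟨c, hc, hsum⟩ := Submodule.mem_span_set.mp hg
    have hs : (c.sum fun mi r => r • mi) = ∑ z ∈ c.support, c z * z := rfl
    rw [← hsum, hs, ← compTHom_apply, map_sum]
    apply Ideal.sum_mem
    intro z hz
    obtain ⟨h, hhL, hzq⟩ := hc hz
    rw [compTHom_apply, ← hzq, compT_mul_pow]
    exact Ideal.mul_mem_left _ _ hhL
  · intro hc
    rw [← reconstruct (p := p) (e := e) g]
    apply Ideal.sum_mem
    intro j _
    apply Ideal.sum_mem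
    intro β _
    exact Ideal.mul_mem_left _ _ (pow_mem_frobPow _ (hc j β))

lemma mem_frobPow_iff_R (L : Ideal (MvPowerSeries (Fin n) K)) (g : MvPolynomial (Fin n) K) :
    (g : MvPowerSeries (Fin n) K) ∈ L.frobPow (p ^ e) ↔
      ∀ j β, ((compT p e j β g : MvPolynomial (Fin n) K) : MvPowerSeries (Fin n) K) ∈ L := by
  constructor
  · intro hg j β
    rw [Ideal.frobPow] at hg
    obtain ⟨c, hc, hsum⟩ := Submodule.mem_span_set.mp hg
    have h1 : compR p e j β (g : MvPowerSeries (Fin n) K) ∈ L := by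
      have hs : (c.sum fun mi r => r • mi) = ∑ z ∈ c.support, c z * z := rfl
      rw [← hsum, hs, ← compRHom_apply, map_sum]
      apply Ideal.sum_mem
      intro z hz
      obtain ⟨h, hhL, hzq⟩ := hc hz
      rw [compRHom_apply, ← hzq, compR_mul_pow]
      exact Ideal.mul_mem_left _ _ hhL
    rwa [← compT_coe] at h1
  · intro hc
    rw [← reconstruct (p := p) (e := e) g, ← MvPolynomial.coeToMvPowerSeries.ringHom_apply,
      map_sum]
    apply Ideal.sum_mem
    intro j _
    rw [map_sum]
    apply Ideal.sum_mem
    intro β _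
    rw [map_mul, map_pow]
    apply Ideal.mul_mem_left
    apply pow_mem_frobPow
    have h2 := hc j β
    rwa [← MvPolynomial.coeToMvPowerSeries.ringHom_apply] at h2

variable (p e) in
/-- The ideal of root components of an ideal. -/
def rootI (C : Ideal (MvPolynomial (Fin n) K)) : Ideal (MvPolynomial (Fin n) K) :=
  Ideal.span {x | ∃ c ∈ C, ∃ j β, x = compT p e j β c}

lemma le_frobPow_iff_T (C L : Ideal (MvPolynomial (Fin n) K)) :
    C ≤ L.frobPow (p ^ e) ↔ rootI p e C ≤ L := by
  rw [rootI, Ideal.span_le]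
  constructor
  · rintro h x ⟨c, hcC, j, β, rfl⟩
    exact (mem_frobPow_iff_T L c).mp (h hcC) j β
  · intro h c hcC
    rw [mem_frobPow_iff_T]
    intro j β
    exact h ⟨c, hcC, j, β, rfl⟩

lemma tilde_T (C : Ideal (MvPolynomial (Fin n) K)) : Ideal.tilde (p ^ e) C = rootI p e C := by
  apply le_antisymm
  · exact sInf_le ((le_frobPow_iff_T C _).mpr le_rfl)
  · exact le_sInf fun L hL => (le_frobPow_iff_T C L).mp hL

lemma le_frobPow_iff_R (C : Ideal (MvPolynomial (Fin n) K))
    (L : Ideal (MvPowerSeries (Fin n) K)) :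
    C.map (MvPolynomial.coeToMvPowerSeries.ringHom (R := K) (σ := Fin n)) ≤ L.frobPow (p ^ e) ↔
      (rootI p e C).map (MvPolynomial.coeToMvPowerSeries.ringHom (R := K) (σ := Fin n)) ≤ L := by
  rw [Ideal.map_le_iff_le_comap, Ideal.map_le_iff_le_comap]
  constructor
  · intro h
    rw [rootI, Ideal.span_le]
    rintro x ⟨c, hcC, j, β, rfl⟩
    have h2 := h hcC
    rw [Ideal.mem_comap, MvPolynomial.coeToMvPowerSeries.ringHom_apply] at h2
    have h3 := (mem_frobPow_iff_R L c).mp h2 j β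
    rw [SetLike.mem_coe, Ideal.mem_comap, MvPolynomial.coeToMvPowerSeries.ringHom_apply]
    exact h3
  · intro h c hcC
    rw [Ideal.mem_comap, MvPolynomial.coeToMvPowerSeries.ringHom_apply, mem_frobPow_iff_R]
    intro j β
    have h2 := h (Ideal.subset_span ⟨c, hcC, j, β, rfl⟩ :
      compT p e j β c ∈ rootI p e C)
    rwa [Ideal.mem_comap, MvPolynomial.coeToMvPowerSeries.ringHom_apply] at h2

lemma tilde_R (C : Ideal (MvPolynomial (Fin n) K)) :
    Ideal.tilde (p ^ e)
        (C.map (MvPolynomial.coeToMvPowerSeries.ringHom (R := K) (σ := Fin n))) =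
      (rootI p e C).map (MvPolynomial.coeToMvPowerSeries.ringHom (R := K) (σ := Fin n)) := by
  apply le_antisymm
  · exact sInf_le ((le_frobPow_iff_R C _).mpr le_rfl)
  · exact le_sInf fun L hL => (le_frobPow_iff_R C L).mp hL

lemma tilde_map (C : Ideal (MvPolynomial (Fin n) K)) :
    Ideal.tilde (p ^ e)
        (C.map (MvPolynomial.coeToMvPowerSeries.ringHom (R := K) (σ := Fin n))) =
      (Ideal.tilde (p ^ e) C).map
        (MvPolynomial.coeToMvPowerSeries.ringHom (R := K) (σ := Fin n)) := by
  rw [tilde_R, tilde_T]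

end S15

end

/-- Let `K` be a field of prime characteristic `p`,
`T = K[x_1,…,x_n]` and `R = K[[x_1,…,x_n]]`.  For every ideal `A` of `T`, `u ∈ T` and
`e ≥ 1`, one has `(AR)^{⋆^e u} = (A^{⋆^e u})R`. -/
theorem stmt15 (K : Type u) [Field K] (p : ℕ) [Fact p.Prime] [CharP K p] (n : ℕ)
    (A : Ideal (MvPolynomial (Fin n) K)) (u : MvPolynomial (Fin n) K)
    (e : ℕ) (he : 1 ≤ e) :
    Ideal.starClosure (MvPolynomial.coeToMvPowerSeries.ringHom u) (p ^ e)
        (Ideal.map (MvPolynomial.coeToMvPowerSeries.ringHom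
          (R := K) (σ := Fin n)) A) =
      Ideal.map (MvPolynomial.coeToMvPowerSeries.ringHom (R := K) (σ := Fin n))
        (Ideal.starClosure u (p ^ e) A) := by
  have chain : ∀ i, Ideal.starChain (MvPolynomial.coeToMvPowerSeries.ringHom u) (p ^ e)
      (A.map (MvPolynomial.coeToMvPowerSeries.ringHom (R := K) (σ := Fin n))) i
      = (Ideal.starChain u (p ^ e) A i).map
          (MvPolynomial.coeToMvPowerSeries.ringHom (R := K) (σ := Fin n)) := by
    intro i
    induction i with
    | zero => rfl
    | succ i ih =>
      rw [Ideal.starChain, Ideal.starChain, ih]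
      have hspan : Ideal.span {MvPolynomial.coeToMvPowerSeries.ringHom u} =
          (Ideal.span {u}).map (MvPolynomial.coeToMvPowerSeries.ringHom (R := K) (σ := Fin n)) := by
        rw [Ideal.map_span, Set.image_singleton]
      rw [hspan, ← Ideal.map_mul, S15.tilde_map, Submodule.add_eq_sup, Submodule.add_eq_sup,
        Ideal.map_sup]
  rw [Ideal.starClosure, Ideal.starClosure]
  simp_rw [chain]
  rw [← Ideal.map_iSup]
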